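/- arXiv:2605.23379 — 2 statements merged into one kernel-verified Lean document; each statement's English description precedes it below -/
import Mathlib

section
/- Let T be a finite tree with at least two edges, v a vertex of T with degree d = d_T(v), and T' the tree obtained from T by attaching one new pendant edge at v. Let f be a unit eigenvector of R_T with eigenvalue λ_max(R_T) whose entries are all positive, and set ρ_v = S_v(f)²/A_v(f) with S_v(f) = Σ_{e ∋ v} f_e and A_v(f) = Σ_{e ∋ v} f_e². If 2(d + 2 + λ_max(R_T)(d+1)) ≥ ρ_v (2 + λ_max(R_T)(d+1)), then λ_max(R_{T'}) ≥ λ_max(R_T). -/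
open SimpleGraph Matrix Finset

/-- The largest eigenvalue of a real matrix, defined as the supremum of its set of
real eigenvalues. -/
noncomputable def lambdaMax {n : Type*} [Fintype n] (M : Matrix n n ℝ) : ℝ :=
  sSup {μ : ℝ | ∃ x : n → ℝ, x ≠ 0 ∧ M.mulVec x = μ • x}

/-- The Ricci matrix of a graph: `(R)_{e,e} = -(1/d_x + 1/d_y)` for `e = {x,y}`,
`(R)_{e,e'} = 1/d_z` for distinct edges sharing the endpoint `z`, and `0` for
disjoint edges. -/
noncomputable def ricciMatrix {V : Type*} [Fintype V] [DecidableEq V]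
    (G : SimpleGraph V) [DecidableRel G.Adj] :
    Matrix G.edgeSet G.edgeSet ℝ := fun e e' =>
  (if e = e' then (-1 : ℝ) else 1) *
    ∑ z : V, (if z ∈ (e : Sym2 V) ∧ z ∈ (e' : Sym2 V) then ((G.degree z : ℝ))⁻¹ else 0)

/-- Adjacency for the tree obtained by attaching `k` new pendant vertices at `v`. -/
def addLeavesAdj {V : Type*} (G : SimpleGraph V) (v : V) (k : ℕ) :
    V ⊕ Fin k → V ⊕ Fin k → Prop
  | Sum.inl x, Sum.inl y => G.Adj x y
  | Sum.inl x, Sum.inr _ => x = v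
  | Sum.inr _, Sum.inl y => y = v
  | Sum.inr _, Sum.inr _ => False

/-- The tree obtained from `G` by attaching `k` new pendant edges at `v`:
`k` new vertices `Sum.inr i`, each joined to `v` by a new edge. -/
def addLeaves {V : Type*} (G : SimpleGraph V) (v : V) (k : ℕ) :
    SimpleGraph (V ⊕ Fin k) where
  Adj := addLeavesAdj G v k
  symm := by
    constructor
    intro a b h
    cases a <;> cases b <;> simp_all [addLeavesAdj] <;> exact h.symm
  loopless := by
    constructor
    intro a
    cases a <;> simp [addLeavesAdj]

instance {V : Type*} [DecidableEq V] (G : SimpleGraph V) [DecidableRel G.Adj]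
    (v : V) (k : ℕ) : DecidableRel (addLeaves G v k).Adj := fun a b =>
  match a, b with
  | Sum.inl x, Sum.inl y => inferInstanceAs (Decidable (G.Adj x y))
  | Sum.inl x, Sum.inr _ => inferInstanceAs (Decidable (x = v))
  | Sum.inr _, Sum.inl y => inferInstanceAs (Decidable (y = v))
  | Sum.inr _, Sum.inr _ => inferInstanceAs (Decidable False)

/-- The extension `f_y` of an edge function `f` on `G` to `addLeaves G v 1`:
it agrees with `f` on (the images of) old edges and takes the value `y` on the new
pendant edge. -/
noncomputable def extendLeaf {V : Type*} [Fintype V] [DecidableEq V]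
    (G : SimpleGraph V) [DecidableRel G.Adj] (v : V) (f : G.edgeSet → ℝ) (y : ℝ) :
    (addLeaves G v 1).edgeSet → ℝ := fun e =>
  if h : ∃ e₀ : G.edgeSet, Sym2.map Sum.inl (e₀ : Sym2 V) = (e : Sym2 (V ⊕ Fin 1))
  then f h.choose else y


set_option linter.unusedSectionVars false
set_option maxHeartbeats 1000000

lemma eigen_bddAbove {n : Type*} [Fintype n] [DecidableEq n] (M : Matrix n n ℝ) :
    BddAbove {μ : ℝ | ∃ x : n → ℝ, x ≠ 0 ∧ M.mulVec x = μ • x} := by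
  set T : EuclideanSpace ℝ n →L[ℝ] EuclideanSpace ℝ n :=
    LinearMap.toContinuousLinearMap (Matrix.toEuclideanLin M) with hTdef
  refine ⟨‖T‖, ?_⟩
  rintro μ ⟨x, hx, hMx⟩
  set xE : EuclideanSpace ℝ n := (WithLp.equiv 2 (n → ℝ)).symm x with hxE
  have hx' : xE ≠ 0 := by
    simpa [hxE] using fun h => hx ((WithLp.equiv 2 (n → ℝ)).symm.injective (by simpa [hxE] using h))
  have hnorm : ‖xE‖ > 0 := norm_pos_iff.2 hx'
  have hTx : T xE = μ • xE := by
    show Matrix.toEuclideanLin M xE = _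
    rw [hxE, WithLp.equiv_symm_apply, Matrix.toEuclideanLin_apply_piLp_toLp, hMx]
    rfl
  have h1 : ‖T xE‖ ≤ ‖T‖ * ‖xE‖ := T.le_opNorm xE
  rw [hTx, norm_smul] at h1
  rw [Real.norm_eq_abs] at h1
  exact le_trans (le_abs_self μ) ((mul_le_mul_iff_left₀ hnorm).1 h1)

lemma rayleigh_le_lambdaMax {n : Type*} [Fintype n] [DecidableEq n] [Nonempty n]
    (M : Matrix n n ℝ) (hM : M.IsHermitian) (g : n → ℝ) :
    g ⬝ᵥ M.mulVec g ≤ lambdaMax M * (g ⬝ᵥ g) := by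
  set T : EuclideanSpace ℝ n →ₗ[ℝ] EuclideanSpace ℝ n := Matrix.toEuclideanLin M with hT
  have hsym : T.IsSymmetric := Matrix.isHermitian_iff_isSymmetric.1 hM
  set μ : ℝ := ⨆ x : { x : EuclideanSpace ℝ n // x ≠ 0 },
      RCLike.re (inner ℝ (T x) (x : EuclideanSpace ℝ n) : ℝ) / ‖(x : EuclideanSpace ℝ n)‖ ^ 2 with hμ
  have heigen := hsym.hasEigenvalue_iSup_of_finiteDimensional
  obtain ⟨x₀, hx₀⟩ := heigen.exists_hasEigenvector
  have hμmem : μ ∈ {μ : ℝ | ∃ x : n → ℝ, x ≠ 0 ∧ M.mulVec x = μ • x} := by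
    refine ⟨(WithLp.equiv 2 (n → ℝ)) x₀, ?_, ?_⟩
    · intro h
      exact hx₀.2 ((WithLp.equiv 2 (n → ℝ)).injective (by simpa using h))
    · have h2 : Matrix.toEuclideanLin M x₀ = μ • x₀ := hx₀.apply_eq_smul
      rw [Matrix.toEuclideanLin_apply] at h2
      have := congrArg (WithLp.equiv 2 (n → ℝ)) h2
      simpa using this
  have hle : μ ≤ lambdaMax M := le_csSup (eigen_bddAbove M) hμmem
  by_cases hg : g = 0
  · simp [hg]
  set gE : EuclideanSpace ℝ n := (WithLp.equiv 2 (n → ℝ)).symm g with hgEdef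
  have hgE : gE ≠ 0 := fun h =>
    hg ((WithLp.equiv 2 (n → ℝ)).symm.injective (by simpa [hgEdef] using h))
  set TC : EuclideanSpace ℝ n →L[ℝ] EuclideanSpace ℝ n := LinearMap.toContinuousLinearMap T
  have hbdd : BddAbove (Set.range fun x : { x : EuclideanSpace ℝ n // x ≠ 0 } =>
      RCLike.re (inner ℝ (T x) (x : EuclideanSpace ℝ n) : ℝ) / ‖(x : EuclideanSpace ℝ n)‖ ^ 2) := by
    refine ⟨‖TC‖, ?_⟩
    rintro r ⟨⟨x, hx⟩, rfl⟩
    have hn : (0:ℝ) < ‖x‖ ^ 2 := by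
      have : ‖x‖ > 0 := norm_pos_iff.2 hx
      positivity
    rw [div_le_iff₀ hn]
    have h1 : (inner ℝ (T x) x : ℝ) ≤ ‖T x‖ * ‖x‖ := real_inner_le_norm _ _
    have h2 : ‖T x‖ ≤ ‖TC‖ * ‖x‖ := TC.le_opNorm x
    simp only [RCLike.re_to_real]
    nlinarith [norm_nonneg (T x), norm_nonneg x]
  have hray : RCLike.re (inner ℝ (T gE) gE : ℝ) / ‖gE‖ ^ 2 ≤ μ :=
    le_ciSup hbdd ⟨gE, hgE⟩
  have hnorm : (0:ℝ) < ‖gE‖ ^ 2 := by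
    have : ‖gE‖ > 0 := norm_pos_iff.2 hgE
    positivity
  simp only [RCLike.re_to_real] at hray
  have key : (inner ℝ (T gE) gE : ℝ) ≤ μ * ‖gE‖ ^ 2 := (div_le_iff₀ hnorm).1 hray
  have hinner : (inner ℝ (T gE) gE : ℝ) = g ⬝ᵥ M.mulVec g := by
    rw [real_inner_comm, PiLp.inner_apply]
    have hTg : T gE = (WithLp.equiv 2 (n → ℝ)).symm (M.mulVec g) := by
      rw [hgEdef]; exact Matrix.toEuclideanLin_apply_piLp_toLp M g
    rw [hTg]
    simp [dotProduct, RCLike.inner_apply, hgEdef, mul_comm]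
  have hnormsq : ‖gE‖ ^ 2 = g ⬝ᵥ g := by
    rw [← real_inner_self_eq_norm_sq, PiLp.inner_apply]
    simp [dotProduct, hgEdef, sq]
  rw [hinner, hnormsq] at key
  calc g ⬝ᵥ M.mulVec g ≤ μ * (g ⬝ᵥ g) := key
    _ ≤ lambdaMax M * (g ⬝ᵥ g) := by
        apply mul_le_mul_of_nonneg_right hle
        rw [← hnormsq]; positivity


section AddLeavesAux

variable {V : Type*} [Fintype V] [DecidableEq V] (G : SimpleGraph V) [DecidableRel G.Adj] (v : V)

-- adjacency lemmas
lemma adj_inl_inl {x y : V} : (addLeaves G v 1).Adj (Sum.inl x) (Sum.inl y) ↔ G.Adj x y := Iff.rfl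
lemma adj_inl_inr {x : V} {i : Fin 1} : (addLeaves G v 1).Adj (Sum.inl x) (Sum.inr i) ↔ x = v := Iff.rfl
lemma adj_inr_inl {y : V} {i : Fin 1} : (addLeaves G v 1).Adj (Sum.inr i) (Sum.inl y) ↔ y = v := Iff.rfl
lemma adj_inr_inr {i j : Fin 1} : ¬ (addLeaves G v 1).Adj (Sum.inr i) (Sum.inr j) := fun h => h

def newE : (addLeaves G v 1).edgeSet :=
  ⟨s(Sum.inl v, Sum.inr 0), (addLeaves G v 1).mem_edgeSet.2 ((adj_inl_inr G v).2 rfl)⟩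

def liftE (e : G.edgeSet) : (addLeaves G v 1).edgeSet :=
  ⟨Sym2.map Sum.inl (e : Sym2 V), by
    obtain ⟨e, he⟩ := e
    induction e using Sym2.ind with
    | _ x y =>
      rw [Sym2.map_pair_eq]
      exact (addLeaves G v 1).mem_edgeSet.2 ((adj_inl_inl G v).2 (G.mem_edgeSet.1 he))⟩

lemma liftE_injective : Function.Injective (liftE G v) := by
  intro e e' h
  apply Subtype.ext
  exact Sym2.map.injective Sum.inl_injective (congrArg Subtype.val h)

lemma mem_liftE_inl {w : V} {e : G.edgeSet} :
    (Sum.inl w : V ⊕ Fin 1) ∈ ((liftE G v e : (addLeaves G v 1).edgeSet) : Sym2 (V ⊕ Fin 1)) ↔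
      w ∈ (e : Sym2 V) := by
  simp only [liftE, Sym2.mem_map]
  constructor
  · rintro ⟨a, ha, hae⟩
    rwa [← Sum.inl_injective hae]
  · exact fun h => ⟨w, h, rfl⟩

lemma not_mem_liftE_inr {i : Fin 1} {e : G.edgeSet} :
    (Sum.inr i : V ⊕ Fin 1) ∉ ((liftE G v e : (addLeaves G v 1).edgeSet) : Sym2 (V ⊕ Fin 1)) := by
  simp only [liftE, Sym2.mem_map]
  rintro ⟨a, _, h⟩
  exact Sum.inl_ne_inr h

lemma mem_newE {z : V ⊕ Fin 1} :
    z ∈ ((newE G v : (addLeaves G v 1).edgeSet) : Sym2 (V ⊕ Fin 1)) ↔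
      z = Sum.inl v ∨ z = Sum.inr 0 := by
  simp [newE, Sym2.mem_iff]

lemma liftE_ne_newE (e : G.edgeSet) : liftE G v e ≠ newE G v := by
  intro h
  have : (Sum.inr 0 : V ⊕ Fin 1) ∈ ((liftE G v e : (addLeaves G v 1).edgeSet) : Sym2 (V ⊕ Fin 1)) := by
    rw [h]; exact (mem_newE G v).2 (Or.inr rfl)
  exact not_mem_liftE_inr G v this

lemma edge_cases (E : (addLeaves G v 1).edgeSet) :
    E = newE G v ∨ ∃ e : G.edgeSet, liftE G v e = E := by
  obtain ⟨E, hE⟩ := E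
  induction E using Sym2.ind with
  | _ x y =>
    have hxy : (addLeaves G v 1).Adj x y := (addLeaves G v 1).mem_edgeSet.1 hE
    match x, y with
    | Sum.inl x, Sum.inl y =>
        exact Or.inr ⟨⟨s(x, y), G.mem_edgeSet.2 hxy⟩, Subtype.ext (Sym2.map_pair_eq _ _ _)⟩
    | Sum.inl x, Sum.inr i =>
        left
        apply Subtype.ext
        have hx : x = v := hxy
        show s(Sum.inl x, Sum.inr i) = s(Sum.inl v, Sum.inr 0)
        rw [hx, Subsingleton.elim i 0]
    | Sum.inr i, Sum.inl y =>
        left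
        apply Subtype.ext
        have hy : y = v := hxy
        show s(Sum.inr i, Sum.inl y) = s(Sum.inl v, Sum.inr 0)
        rw [hy, Subsingleton.elim i 0]
        exact Sym2.eq_swap
    | Sum.inr i, Sum.inr j => exact absurd hxy (adj_inr_inr G v)

lemma sum_edges (F : (addLeaves G v 1).edgeSet → ℝ) :
    ∑ E, F E = F (newE G v) + ∑ e, F (liftE G v e) := by
  have huniv : (univ : Finset (addLeaves G v 1).edgeSet)
      = insert (newE G v) (univ.image (liftE G v)) := by
    ext E
    simp only [mem_univ, true_iff, mem_insert, mem_image]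
    rcases edge_cases G v E with h | ⟨e, he⟩
    · exact Or.inl h
    · exact Or.inr ⟨e, trivial, he⟩
  rw [huniv, Finset.sum_insert (by
        simp only [mem_image, not_exists]
        intro e h
        exact liftE_ne_newE G v e h.2),
    Finset.sum_image (fun e _ e' _ h => liftE_injective G v h)]

lemma degree_inl (w : V) :
    (addLeaves G v 1).degree (Sum.inl w) = G.degree w + (if w = v then 1 else 0) := by
  classical
  rw [SimpleGraph.degree, SimpleGraph.degree, neighborFinset_eq_filter, neighborFinset_eq_filter,
    Finset.card_filter, Finset.card_filter, Fintype.sum_sum_type]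
  simp [adj_inl_inl, adj_inl_inr]

lemma degree_inr (i : Fin 1) : (addLeaves G v 1).degree (Sum.inr i) = 1 := by
  classical
  rw [SimpleGraph.degree, neighborFinset_eq_filter, Finset.card_filter, Fintype.sum_sum_type]
  have h1 : ∑ y : V, (if (addLeaves G v 1).Adj (Sum.inr i) (Sum.inl y) then 1 else 0) = 1 := by
    simp only [adj_inr_inl]
    simp
  have h2 : ∑ j : Fin 1, (if (addLeaves G v 1).Adj (Sum.inr i) (Sum.inr j) then 1 else 0) = 0 := by
    simp [adj_inr_inr]
  omega


lemma degR_inl (w : V) :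
    (((addLeaves G v 1).degree (Sum.inl w) : ℕ) : ℝ)
      = (G.degree w : ℝ) + (if w = v then 1 else 0) := by
  rw [degree_inl]; by_cases h : w = v <;> simp [h]

lemma degR_inr (i : Fin 1) : (((addLeaves G v 1).degree (Sum.inr i) : ℕ) : ℝ) = 1 := by
  rw [degree_inr]; norm_num

lemma extendLeaf_liftE (f : G.edgeSet → ℝ) (y : ℝ) (e : G.edgeSet) :
    extendLeaf G v f y (liftE G v e) = f e := by
  rw [extendLeaf]
  have h : ∃ e₀ : G.edgeSet, Sym2.map Sum.inl (e₀ : Sym2 V)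
      = ((liftE G v e : (addLeaves G v 1).edgeSet) : Sym2 (V ⊕ Fin 1)) := ⟨e, rfl⟩
  rw [dif_pos h]
  congr 1
  apply Subtype.ext
  exact Sym2.map.injective Sum.inl_injective h.choose_spec

lemma extendLeaf_newE (f : G.edgeSet → ℝ) (y : ℝ) :
    extendLeaf G v f y (newE G v) = y := by
  rw [extendLeaf, dif_neg]
  rintro ⟨e₀, he₀⟩
  have : (Sum.inr 0 : V ⊕ Fin 1) ∈ Sym2.map Sum.inl (e₀ : Sym2 V) := by
    rw [he₀]; exact (mem_newE G v).2 (Or.inr rfl)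
  simp [Sym2.mem_map] at this

lemma ricci_symm (e e' : G.edgeSet) : ricciMatrix G e e' = ricciMatrix G e' e := by
  by_cases h : e = e'
  · subst h; rfl
  · rw [ricciMatrix, ricciMatrix, if_neg h, if_neg (Ne.symm h)]
    congr 1
    apply Finset.sum_congr rfl
    intro z _
    exact if_congr and_comm rfl rfl

lemma ricci_isHermitian : (ricciMatrix G).IsHermitian := by
  apply Matrix.ext
  intro e e'
  rw [Matrix.conjTranspose_apply, star_trivial]
  exact ricci_symm G e' e

lemma ricci_newE_newE :
    ricciMatrix (addLeaves G v 1) (newE G v) (newE G v)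
      = -(((G.degree v : ℝ) + 1)⁻¹ + 1) := by
  have hinl : ∀ w : V, ((Sum.inl w : V ⊕ Fin 1)
      ∈ ((newE G v : (addLeaves G v 1).edgeSet) : Sym2 (V ⊕ Fin 1))) ↔ w = v := by
    intro w; rw [mem_newE]; simp
  have hinr : ∀ i : Fin 1, ((Sum.inr i : V ⊕ Fin 1)
      ∈ ((newE G v : (addLeaves G v 1).edgeSet) : Sym2 (V ⊕ Fin 1))) := by
    intro i
    rw [Subsingleton.elim i 0]
    exact (mem_newE G v).2 (Or.inr rfl)
  rw [ricciMatrix, if_pos rfl, Fintype.sum_sum_type]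
  simp only [hinl, hinr, and_self, if_true, true_and]
  rw [Finset.sum_ite_eq' Finset.univ v (fun w => (((addLeaves G v 1).degree (Sum.inl w) : ℕ) : ℝ)⁻¹)]
  simp [degR_inl, degR_inr]

lemma ricci_newE_liftE (e : G.edgeSet) :
    ricciMatrix (addLeaves G v 1) (newE G v) (liftE G v e)
      = if v ∈ (e : Sym2 V) then ((G.degree v : ℝ) + 1)⁻¹ else 0 := by
  have hinl : ∀ w : V, ((Sum.inl w : V ⊕ Fin 1)
      ∈ ((newE G v : (addLeaves G v 1).edgeSet) : Sym2 (V ⊕ Fin 1))) ↔ w = v := by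
    intro w; rw [mem_newE]; simp
  rw [ricciMatrix, if_neg (fun h => liftE_ne_newE G v e h.symm), Fintype.sum_sum_type]
  have h2 : ∀ i : Fin 1, (if ((Sum.inr i : V ⊕ Fin 1)
      ∈ ((newE G v : (addLeaves G v 1).edgeSet) : Sym2 (V ⊕ Fin 1)))
      ∧ ((Sum.inr i : V ⊕ Fin 1) ∈ ((liftE G v e : (addLeaves G v 1).edgeSet) : Sym2 (V ⊕ Fin 1)))
      then (((addLeaves G v 1).degree (Sum.inr i) : ℕ) : ℝ)⁻¹ else 0) = 0 := by
    intro i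
    rw [if_neg]
    rintro ⟨-, hmem⟩
    exact not_mem_liftE_inr G v hmem
  rw [Finset.sum_congr rfl (fun i _ => h2 i), Finset.sum_const, smul_zero, add_zero, one_mul]
  have h1 : ∀ w : V, (if ((Sum.inl w : V ⊕ Fin 1)
      ∈ ((newE G v : (addLeaves G v 1).edgeSet) : Sym2 (V ⊕ Fin 1)))
      ∧ ((Sum.inl w : V ⊕ Fin 1) ∈ ((liftE G v e : (addLeaves G v 1).edgeSet) : Sym2 (V ⊕ Fin 1)))
      then (((addLeaves G v 1).degree (Sum.inl w) : ℕ) : ℝ)⁻¹ else 0)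
      = if w = v then (if v ∈ (e : Sym2 V) then ((G.degree v : ℝ) + 1)⁻¹ else 0) else 0 := by
    intro w
    simp only [hinl, mem_liftE_inl]
    by_cases hw : w = v
    · subst hw
      by_cases hv : w ∈ (e : Sym2 V) <;> simp [hv, degR_inl]
    · simp [hw]
  rw [Finset.sum_congr rfl (fun w _ => h1 w), Finset.sum_ite_eq' Finset.univ v]
  simp

lemma ricci_liftE_liftE (e e' : G.edgeSet) :
    ricciMatrix (addLeaves G v 1) (liftE G v e) (liftE G v e')
      = ricciMatrix G e e' + (if e = e' then (-1:ℝ) else 1) *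
          (if v ∈ (e : Sym2 V) ∧ v ∈ (e' : Sym2 V)
            then (((G.degree v : ℝ) + 1)⁻¹ - (G.degree v : ℝ)⁻¹) else 0) := by
  have hiff : liftE G v e = liftE G v e' ↔ e = e' :=
    ⟨fun h => liftE_injective G v h, fun h => congrArg _ h⟩
  rw [ricciMatrix, ricciMatrix, if_congr hiff rfl rfl, ← mul_add]
  congr 1
  rw [Fintype.sum_sum_type]
  have h2 : ∀ i : Fin 1, (if ((Sum.inr i : V ⊕ Fin 1)
      ∈ ((liftE G v e : (addLeaves G v 1).edgeSet) : Sym2 (V ⊕ Fin 1)))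
      ∧ ((Sum.inr i : V ⊕ Fin 1) ∈ ((liftE G v e' : (addLeaves G v 1).edgeSet) : Sym2 (V ⊕ Fin 1)))
      then (((addLeaves G v 1).degree (Sum.inr i) : ℕ) : ℝ)⁻¹ else 0) = 0 := by
    intro i
    rw [if_neg]
    rintro ⟨hmem, -⟩
    exact not_mem_liftE_inr G v hmem
  rw [Finset.sum_congr rfl (fun i _ => h2 i), Finset.sum_const, smul_zero, add_zero]
  have h1 : ∀ w : V, (if ((Sum.inl w : V ⊕ Fin 1)
      ∈ ((liftE G v e : (addLeaves G v 1).edgeSet) : Sym2 (V ⊕ Fin 1)))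
      ∧ ((Sum.inl w : V ⊕ Fin 1) ∈ ((liftE G v e' : (addLeaves G v 1).edgeSet) : Sym2 (V ⊕ Fin 1)))
      then (((addLeaves G v 1).degree (Sum.inl w) : ℕ) : ℝ)⁻¹ else 0)
      = (if w ∈ (e : Sym2 V) ∧ w ∈ (e' : Sym2 V) then ((G.degree w : ℝ))⁻¹ else 0)
        + (if w = v then (if v ∈ (e : Sym2 V) ∧ v ∈ (e' : Sym2 V)
            then (((G.degree v : ℝ) + 1)⁻¹ - (G.degree v : ℝ)⁻¹) else 0) else 0) := by
    intro w
    simp only [mem_liftE_inl]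
    by_cases hw : w = v
    · subst hw
      by_cases hc : w ∈ (e : Sym2 V) ∧ w ∈ (e' : Sym2 V)
      · simp only [hc, if_pos, if_pos rfl, degR_inl, if_pos rfl, and_self, if_true, true_and]
        norm_num
      · simp [hc]
    · simp [hw, degR_inl]
  rw [Finset.sum_congr rfl (fun w _ => h1 w), Finset.sum_add_distrib,
    Finset.sum_ite_eq' Finset.univ v]
  simp


lemma quad_form (f : G.edgeSet → ℝ) (y : ℝ) :
    (extendLeaf G v f y) ⬝ᵥ (ricciMatrix (addLeaves G v 1)).mulVec (extendLeaf G v f y)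
      = f ⬝ᵥ (ricciMatrix G).mulVec f
        + (((G.degree v : ℝ) + 1)⁻¹ - ((G.degree v : ℝ))⁻¹)
          * ((∑ e : G.edgeSet, if v ∈ (e : Sym2 V) then f e else 0) ^ 2
             - 2 * ∑ e : G.edgeSet, if v ∈ (e : Sym2 V) then (f e)^2 else 0)
        + 2 * y * (((G.degree v : ℝ)) + 1)⁻¹
          * (∑ e : G.edgeSet, if v ∈ (e : Sym2 V) then f e else 0)
        - ((((G.degree v : ℝ)) + 1)⁻¹ + 1) * y^2 := by
  set d : ℝ := (G.degree v : ℝ) with hd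
  set S : ℝ := ∑ e : G.edgeSet, if v ∈ (e : Sym2 V) then f e else 0 with hS
  set A : ℝ := ∑ e : G.edgeSet, if v ∈ (e : Sym2 V) then (f e)^2 else 0 with hA
  set c2 : ℝ := (d + 1)⁻¹ - d⁻¹ with hc2
  set g := extendLeaf G v f y with hg
  have hgn : g (newE G v) = y := extendLeaf_newE G v f y
  have hgl : ∀ e, g (liftE G v e) = f e := extendLeaf_liftE G v f y
  have hmv : ∀ E, (ricciMatrix (addLeaves G v 1)).mulVec g E
      = ricciMatrix (addLeaves G v 1) E (newE G v) * y
        + ∑ e', ricciMatrix (addLeaves G v 1) E (liftE G v e') * f e' := by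
    intro E
    rw [Matrix.mulVec, dotProduct,
      sum_edges G v (fun E' => ricciMatrix (addLeaves G v 1) E E' * g E'), hgn]
    congr 1
    exact Finset.sum_congr rfl (fun e' _ => by rw [hgl])
  have hcross : ∀ E, (∑ e', ricciMatrix (addLeaves G v 1) E (liftE G v e')
        * f e') = ∑ e', ricciMatrix (addLeaves G v 1) E (liftE G v e') * f e' := fun _ => rfl
  -- row at newE
  have hnewrow : ∑ e' : G.edgeSet, ricciMatrix (addLeaves G v 1) (newE G v) (liftE G v e') * f e'
      = (d + 1)⁻¹ * S := by
    rw [hS, Finset.mul_sum]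
    apply Finset.sum_congr rfl
    intro e' _
    rw [ricci_newE_liftE]
    by_cases h : v ∈ (e' : Sym2 V) <;> simp [h, hd]
  have hrowsymm : ∀ e : G.edgeSet, ricciMatrix (addLeaves G v 1) (liftE G v e) (newE G v)
      = if v ∈ (e : Sym2 V) then (d + 1)⁻¹ else 0 := by
    intro e
    rw [ricci_symm, ricci_newE_liftE]
  -- the old-edge double sum
  have hdouble : ∑ e : G.edgeSet, f e
        * (∑ e' : G.edgeSet, ricciMatrix (addLeaves G v 1) (liftE G v e) (liftE G v e') * f e')
      = f ⬝ᵥ (ricciMatrix G).mulVec f + c2 * (S^2 - 2*A) := by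
    have hsplit : ∀ e : G.edgeSet,
        (∑ e' : G.edgeSet, ricciMatrix (addLeaves G v 1) (liftE G v e) (liftE G v e') * f e')
        = (∑ e' : G.edgeSet, ricciMatrix G e e' * f e')
          + ∑ e' : G.edgeSet, (if e = e' then (-1:ℝ) else 1)
              * (if v ∈ (e : Sym2 V) ∧ v ∈ (e' : Sym2 V) then c2 else 0) * f e' := by
      intro e
      rw [← Finset.sum_add_distrib]
      apply Finset.sum_congr rfl
      intro e' _
      rw [ricci_liftE_liftE]
      ring
    rw [Finset.sum_congr rfl (fun e _ => by rw [hsplit e, mul_add])]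
    rw [Finset.sum_add_distrib]
    congr 1
    -- the sign sum
    have hterm : ∀ e e' : G.edgeSet, f e * ((if e = e' then (-1:ℝ) else 1)
          * (if v ∈ (e : Sym2 V) ∧ v ∈ (e' : Sym2 V) then c2 else 0) * f e')
        = c2 * ((if v ∈ (e : Sym2 V) then f e else 0) * (if v ∈ (e' : Sym2 V) then f e' else 0))
          - 2 * c2 * (if e = e' then (if v ∈ (e : Sym2 V) then (f e)^2 else 0) else 0) := by
      intro e e'
      by_cases h : e = e'
      · subst h
        by_cases hv : v ∈ (e : Sym2 V) <;> simp [hv] <;> ring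
      · by_cases hv : v ∈ (e : Sym2 V) <;> by_cases hv' : v ∈ (e' : Sym2 V) <;>
          simp [h, hv, hv'] <;> ring
    have step1 : ∑ e : G.edgeSet, f e * (∑ e' : G.edgeSet, (if e = e' then (-1:ℝ) else 1)
          * (if v ∈ (e : Sym2 V) ∧ v ∈ (e' : Sym2 V) then c2 else 0) * f e')
        = ∑ e : G.edgeSet, ∑ e' : G.edgeSet,
            (c2 * ((if v ∈ (e : Sym2 V) then f e else 0) * (if v ∈ (e' : Sym2 V) then f e' else 0))
             - 2 * c2 * (if e = e' then (if v ∈ (e : Sym2 V) then (f e)^2 else 0) else 0)) := by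
      apply Finset.sum_congr rfl
      intro e _
      rw [Finset.mul_sum]
      exact Finset.sum_congr rfl (fun e' _ => hterm e e')
    rw [step1]
    have step2 : ∀ e : G.edgeSet, ∑ e' : G.edgeSet,
          (c2 * ((if v ∈ (e : Sym2 V) then f e else 0) * (if v ∈ (e' : Sym2 V) then f e' else 0))
           - 2 * c2 * (if e = e' then (if v ∈ (e : Sym2 V) then (f e)^2 else 0) else 0))
        = c2 * ((if v ∈ (e : Sym2 V) then f e else 0) * S)
          - 2 * c2 * (if v ∈ (e : Sym2 V) then (f e)^2 else 0) := by
      intro e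
      rw [Finset.sum_sub_distrib]
      congr 1
      · rw [hS, ← Finset.mul_sum, ← Finset.mul_sum]
      · rw [← Finset.mul_sum, Finset.sum_ite_eq Finset.univ e
          (fun _ => if v ∈ (e : Sym2 V) then (f e)^2 else 0), if_pos (Finset.mem_univ e)]
    rw [Finset.sum_congr rfl (fun e _ => step2 e), Finset.sum_sub_distrib,
      ← Finset.mul_sum, ← Finset.mul_sum, ← Finset.sum_mul, ← hS, ← hA]
    ring
  -- assemble
  rw [dotProduct, sum_edges G v (fun E => g E * (ricciMatrix (addLeaves G v 1)).mulVec g E),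
    hgn, hmv, hnewrow, ricci_newE_newE]
  have hrest : ∑ e : G.edgeSet, g (liftE G v e)
        * ((ricciMatrix (addLeaves G v 1)).mulVec g (liftE G v e))
      = y * ((d+1)⁻¹ * S) + (f ⬝ᵥ (ricciMatrix G).mulVec f + c2 * (S^2 - 2*A)) := by
    have : ∀ e : G.edgeSet, g (liftE G v e)
          * ((ricciMatrix (addLeaves G v 1)).mulVec g (liftE G v e))
        = (if v ∈ (e : Sym2 V) then (d+1)⁻¹ else 0) * y * f e
          + f e * (∑ e', ricciMatrix (addLeaves G v 1) (liftE G v e) (liftE G v e') * f e') := by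
      intro e
      rw [hgl, hmv, hrowsymm]
      ring
    rw [Finset.sum_congr rfl (fun e _ => this e), Finset.sum_add_distrib, hdouble]
    congr 1
    rw [hS, show ((d:ℝ)+1)⁻¹ * ∑ e : G.edgeSet, (if v ∈ (e : Sym2 V) then f e else 0)
        = ∑ e : G.edgeSet, (d+1)⁻¹ * (if v ∈ (e : Sym2 V) then f e else 0) from
      Finset.mul_sum _ _ _, Finset.mul_sum]
    apply Finset.sum_congr rfl
    intro e _
    by_cases h : v ∈ (e : Sym2 V) <;> simp [h] <;> ring
  rw [hrest]
  push_cast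
  ring


lemma exists_adj_of_edge (hconn : G.Preconnected) :
    ∀ e₀ ∈ G.edgeSet, ∃ w, G.Adj v w := by
  intro e₀
  induction e₀ using Sym2.ind with
  | _ a b =>
    intro hab
    obtain ⟨p⟩ := hconn v a
    cases p with
    | nil => exact ⟨b, hab⟩
    | cons h _ => exact ⟨_, h⟩

end AddLeavesAux

/-- If `f` is a positive unit eigenvector of `R_T` for `λ_max(R_T)` and
`2(d+2+λ_max(d+1)) ≥ ρ_v(2+λ_max(d+1))` where `ρ_v = S_v(f)²/A_v(f)`, then attaching
one pendant edge at `v` does not decrease the largest eigenvalue. -/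
theorem lambdaMax_mono_of_rho_criterion {V : Type*} [Fintype V] [DecidableEq V]
    (G : SimpleGraph V) [DecidableRel G.Adj]
    (hT : G.IsTree) (h2 : 2 ≤ G.edgeFinset.card) (v : V) (f : G.edgeSet → ℝ)
    (hunit : f ⬝ᵥ f = 1)
    (heig : (ricciMatrix G).mulVec f = lambdaMax (ricciMatrix G) • f)
    (hpos : ∀ e : G.edgeSet, 0 < f e)
    (hcrit :
      (∑ e : G.edgeSet, if v ∈ (e : Sym2 V) then f e else 0) ^ 2 /
          (∑ e : G.edgeSet, if v ∈ (e : Sym2 V) then (f e) ^ 2 else 0) *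
          (2 + lambdaMax (ricciMatrix G) * ((G.degree v : ℝ) + 1)) ≤
        2 * ((G.degree v : ℝ) + 2 +
          lambdaMax (ricciMatrix G) * ((G.degree v : ℝ) + 1))) :
    lambdaMax (ricciMatrix G) ≤ lambdaMax (ricciMatrix (addLeaves G v 1)) := by
  classical
  set lam : ℝ := lambdaMax (ricciMatrix G) with hlam
  set d : ℝ := (G.degree v : ℝ) with hd
  set S : ℝ := ∑ e : G.edgeSet, if v ∈ (e : Sym2 V) then f e else 0 with hS
  set A : ℝ := ∑ e : G.edgeSet, if v ∈ (e : Sym2 V) then (f e) ^ 2 else 0 with hA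
  set B : ℝ := d + 2 + lam * (d + 1) with hB
  -- basic positivity facts
  have hcard : 0 < G.edgeFinset.card := lt_of_lt_of_le (by norm_num) h2
  obtain ⟨e₀, he₀⟩ := Finset.card_pos.1 hcard
  obtain ⟨w, hw⟩ : ∃ w, G.Adj v w :=
    exists_adj_of_edge G v hT.isConnected.preconnected e₀ (SimpleGraph.mem_edgeFinset.1 he₀)
  have hdeg : 0 < G.degree v := (G.degree_pos_iff_exists_adj v).2 ⟨w, hw⟩
  have hd0 : (0:ℝ) < d := by rw [hd]; exact_mod_cast hdeg
  have hd1 : (0:ℝ) < d + 1 := by linarith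
  set ev : G.edgeSet := ⟨s(v, w), G.mem_edgeSet.2 hw⟩ with hev
  have hvmem : v ∈ (ev : Sym2 V) := Sym2.mem_mk_left v w
  have hSpos : 0 < S := by
    rw [hS]
    apply Finset.sum_pos'
    · intro e _
      by_cases h : v ∈ (e : Sym2 V)
      · rw [if_pos h]; exact (hpos e).le
      · rw [if_neg h]
    · exact ⟨ev, Finset.mem_univ _, by rw [if_pos hvmem]; exact hpos ev⟩
  have hApos : 0 < A := by
    rw [hA]
    apply Finset.sum_pos'
    · intro e _
      by_cases h : v ∈ (e : Sym2 V)
      · rw [if_pos h]; positivity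
      · rw [if_neg h]
    · exact ⟨ev, Finset.mem_univ _, by rw [if_pos hvmem]; exact pow_pos (hpos ev) 2⟩
  have hflam : f ⬝ᵥ (ricciMatrix G).mulVec f = lam := by
    rw [heig]
    have : f ⬝ᵥ (lam • f) = lam * (f ⬝ᵥ f) := by
      simp [dotProduct, Finset.mul_sum, smul_eq_mul]
      apply Finset.sum_congr rfl
      intro e _
      ring
    rw [this, hunit, mul_one]
  -- choice of the extension value y
  set y : ℝ := if 0 < B then S / B else max ((S^2 - 2*A)/(2*S*d)) 0 + 1 with hy
  -- key quadratic inequality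
  have key : d * (y^2*B - 2*S*y) + (S^2 - 2*A) ≤ 0 := by
    by_cases hBpos : 0 < B
    · rw [hy, if_pos hBpos]
      have hcrit' : S^2 * (2 + lam*(d+1)) ≤ 2*A*B := by
        have h1 : S^2/A * (2 + lam * (d + 1)) ≤ 2 * B := hcrit
        have h2 : S^2 * (2 + lam*(d+1)) = (S^2/A * (2 + lam*(d+1))) * A := by
          field_simp
        rw [h2]
        calc (S^2/A * (2 + lam*(d+1))) * A ≤ (2*B) * A :=
              mul_le_mul_of_nonneg_right h1 hApos.le
          _ = 2*A*B := by ring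
      have h1 : (S^2 - 2*A)*B ≤ d*S^2 := by nlinarith [hcrit']
      have h2 : d*((S/B)^2*B - 2*S*(S/B)) + (S^2 - 2*A)
          = ((S^2 - 2*A)*B - d*S^2)/B := by
        field_simp
        ring
      rw [h2]
      apply div_nonpos_of_nonpos_of_nonneg (by linarith) hBpos.le
    · rw [hy, if_neg hBpos]
      push_neg at hBpos
      set y0 : ℝ := max ((S^2 - 2*A)/(2*S*d)) 0 + 1 with hy0
      have hy0pos : 0 < y0 := by
        have := le_max_right ((S^2 - 2*A)/(2*S*d)) 0
        rw [hy0]; linarith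
      have h2Sd : (0:ℝ) < 2*S*d := by positivity
      have hge : S^2 - 2*A ≤ 2*S*d*y0 := by
        have h1 : (S^2 - 2*A)/(2*S*d) ≤ y0 := by
          have := le_max_left ((S^2 - 2*A)/(2*S*d)) 0
          rw [hy0]; linarith
        calc S^2 - 2*A = ((S^2 - 2*A)/(2*S*d))*(2*S*d) := by field_simp
          _ ≤ y0*(2*S*d) := mul_le_mul_of_nonneg_right h1 h2Sd.le
          _ = 2*S*d*y0 := by ring
      nlinarith [sq_nonneg y0, mul_pos hd0 (mul_pos hy0pos hy0pos)]
  -- apply the Rayleigh quotient bound on the bigger tree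
  haveI : Nonempty (addLeaves G v 1).edgeSet := ⟨newE G v⟩
  have hray := rayleigh_le_lambdaMax (ricciMatrix (addLeaves G v 1))
    (ricci_isHermitian (addLeaves G v 1)) (extendLeaf G v f y)
  have hQ := quad_form G v f y
  rw [hflam, ← hS, ← hA, ← hd] at hQ
  have hgg : extendLeaf G v f y ⬝ᵥ extendLeaf G v f y = y^2 + 1 := by
    rw [dotProduct, sum_edges G v (fun E => extendLeaf G v f y E * extendLeaf G v f y E),
      extendLeaf_newE]
    have h1 : ∀ e : G.edgeSet, extendLeaf G v f y (liftE G v e)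
          * extendLeaf G v f y (liftE G v e) = f e * f e := by
      intro e
      rw [extendLeaf_liftE]
    rw [Finset.sum_congr rfl (fun e _ => h1 e)]
    have h2 : ∑ e : G.edgeSet, f e * f e = 1 := hunit
    rw [h2]
    ring
  rw [hQ, hgg] at hray
  -- lower bound the quadratic form by lam * (y^2 + 1)
  have hlow : lam * (y^2 + 1)
      ≤ lam + ((d + 1)⁻¹ - d⁻¹) * (S^2 - 2*A) + 2*y*(d+1)⁻¹*S - ((d+1)⁻¹ + 1)*y^2 := by
    have hfact : (lam + ((d + 1)⁻¹ - d⁻¹) * (S^2 - 2*A) + 2*y*(d+1)⁻¹*S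
          - ((d+1)⁻¹ + 1)*y^2) - lam * (y^2 + 1)
        = ((d+1)⁻¹ * d⁻¹) * (-(d * (y^2*B - 2*S*y) + (S^2 - 2*A))) := by
      rw [hB]
      field_simp
      ring
    have hprod : 0 ≤ ((d+1)⁻¹ * d⁻¹) * (-(d * (y^2*B - 2*S*y) + (S^2 - 2*A))) :=
      mul_nonneg (by positivity) (by linarith)
    linarith [hfact ▸ hprod]
  have hy2 : (0:ℝ) < y^2 + 1 := by positivity
  have hfinal : lam * (y^2 + 1) ≤ lambdaMax (ricciMatrix (addLeaves G v 1)) * (y^2 + 1) := by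
    calc lam * (y^2 + 1)
        ≤ lam + ((d + 1)⁻¹ - d⁻¹) * (S^2 - 2*A) + 2*y*(d+1)⁻¹*S - ((d+1)⁻¹ + 1)*y^2 := hlow
      _ ≤ lambdaMax (ricciMatrix (addLeaves G v 1)) * (y^2 + 1) := by
          convert hray using 2 <;> ring
  exact le_of_mul_le_mul_right hfinal hy2
end

section
/- Let T be a finite tree with at least one edge and v a vertex of T. For k ≥ 0 let T_k be the tree obtained from T by attaching k new pendant edges at v, and set λ_k = λ_max(R_{T_k}). Then lim_{k→∞} λ_k = 0 if and only if λ_max(M^v) ≤ 0, where M^v is the Dirichlet matrix of T at v. -/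
set_option linter.unusedSectionVars false
set_option linter.unnecessarySeqFocus false
set_option linter.unusedVariables false
set_option maxHeartbeats 1000000
open SimpleGraph Matrix Finset


/-- The Dirichlet matrix `M^v` of `G` at `v`: obtained from the Ricci matrix by setting
every occurrence of `1/d_v` to zero (Dirichlet boundary condition at `v`). -/
noncomputable def dirichletMatrix {V : Type*} [Fintype V] [DecidableEq V]
    (G : SimpleGraph V) [DecidableRel G.Adj] (v : V) :
    Matrix G.edgeSet G.edgeSet ℝ := fun e e' =>
  (if e = e' then (-1 : ℝ) else 1) *
    ∑ z : V, (if z ∈ (e : Sym2 V) ∧ z ∈ (e' : Sym2 V) ∧ z ≠ v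
      then ((G.degree z : ℝ))⁻¹ else 0)


section Spectral
variable {n : Type*} [Fintype n] [DecidableEq n]

lemma dot_self_nonneg (x : n → ℝ) : 0 ≤ x ⬝ᵥ x :=
  Finset.sum_nonneg fun i _ => mul_self_nonneg _

lemma dot_self_pos {x : n → ℝ} (hx : x ≠ 0) : 0 < x ⬝ᵥ x :=
  ((dot_self_nonneg x).lt_or_eq).elim id fun h =>
    absurd (dotProduct_self_eq_zero.mp h.symm) hx

lemma eigSet_bddAbove (M : Matrix n n ℝ) :
    BddAbove {μ : ℝ | ∃ x : n → ℝ, x ≠ 0 ∧ M.mulVec x = μ • x} := by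
  use ∑ i, ∑ j, |M i j|
  rintro μ ⟨x, hx, hMx⟩
  obtain ⟨i0, hi0⟩ := Function.ne_iff.mp hx
  obtain ⟨i, -, hi⟩ := Finset.exists_max_image Finset.univ (fun i => |x i|) ⟨i0, mem_univ i0⟩
  have hxi : 0 < |x i| := lt_of_lt_of_le (abs_pos.mpr hi0) (hi i0 (mem_univ i0))
  have h1 : μ * x i = ∑ j, M i j * x j := by
    have := congr_fun hMx i
    simpa [Matrix.mulVec, dotProduct, mul_comm] using this.symm
  have h2 : |μ| * |x i| ≤ (∑ j, |M i j|) * |x i| := by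
    rw [← abs_mul, h1, Finset.sum_mul]
    refine (Finset.abs_sum_le_sum_abs _ _).trans (Finset.sum_le_sum fun j _ => ?_)
    rw [abs_mul]
    exact mul_le_mul_of_nonneg_left (hi j (mem_univ j)) (abs_nonneg _)
  have h3 : |μ| ≤ ∑ j, |M i j| := le_of_mul_le_mul_right h2 hxi
  calc μ ≤ |μ| := le_abs_self μ
    _ ≤ ∑ j, |M i j| := h3
    _ ≤ ∑ i, ∑ j, |M i j| :=
      Finset.single_le_sum (f := fun i => ∑ j, |M i j|)
        (fun i _ => Finset.sum_nonneg fun j _ => abs_nonneg _) (mem_univ i)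

lemma eigSet_nonempty [Nonempty n] {M : Matrix n n ℝ} (hM : M.IsHermitian) :
    Set.Nonempty {μ : ℝ | ∃ x : n → ℝ, x ≠ 0 ∧ M.mulVec x = μ • x} := by
  inhabit n
  exact ⟨hM.eigenvalues default, ⇑(hM.eigenvectorBasis default),
    (by simpa using hM.eigenvectorBasis.orthonormal.ne_zero default), hM.mulVec_eigenvectorBasis default⟩

lemma dot_mulVec_le [Nonempty n] {M : Matrix n n ℝ} (hM : M.IsHermitian) (x : n → ℝ) :
    x ⬝ᵥ M *ᵥ x ≤ lambdaMax M * (x ⬝ᵥ x) := by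
  have hbdd := eigSet_bddAbove M
  have hle : ∀ i, hM.eigenvalues i ≤ lambdaMax M := fun i =>
    le_csSup hbdd ⟨_, by simpa using hM.eigenvectorBasis.orthonormal.ne_zero i, hM.mulVec_eigenvectorBasis i⟩
  set U : Matrix n n ℝ := (hM.eigenvectorUnitary : Matrix n n ℝ) with hUdef
  have hstar : star U = Uᵀ := by
    ext i j; simp [Matrix.conjTranspose_apply]
  have hU : U * Uᵀ = 1 := by
    rw [← hstar]; exact (Matrix.mem_unitaryGroup_iff).mp hM.eigenvectorUnitary.2
  set y : n → ℝ := Uᵀ *ᵥ x with hy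
  have hyy : y ⬝ᵥ y = x ⬝ᵥ x := by
    have : U *ᵥ y = x := by
      rw [hy, Matrix.mulVec_mulVec, hU, Matrix.one_mulVec]
    calc y ⬝ᵥ y = y ⬝ᵥ (Uᵀ *ᵥ x) := by rw [hy]
      _ = (y ᵥ* Uᵀ) ⬝ᵥ x := by rw [Matrix.dotProduct_mulVec]
      _ = (U *ᵥ y) ⬝ᵥ x := by rw [Matrix.vecMul_transpose]
      _ = x ⬝ᵥ x := by rw [this]
  have hspec : M = U * (Matrix.diagonal hM.eigenvalues) * Uᵀ := by
    have := hM.spectral_theorem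
    rw [Unitary.conjStarAlgAut_apply, ← hUdef, hstar] at this
    simpa using this
  have hform : x ⬝ᵥ M *ᵥ x = ∑ i, hM.eigenvalues i * (y i)^2 := by
    have h1 : M *ᵥ x = U *ᵥ ((Matrix.diagonal hM.eigenvalues) *ᵥ y) := by
      rw [hy, Matrix.mulVec_mulVec, Matrix.mulVec_mulVec, ← hspec]
    rw [h1, Matrix.dotProduct_mulVec, ← Matrix.mulVec_transpose, ← hy]
    simp only [dotProduct, Matrix.mulVec_diagonal]
    exact Finset.sum_congr rfl fun i _ => by ring
  rw [hform, ← hyy]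
  calc ∑ i, hM.eigenvalues i * (y i)^2 ≤ ∑ i, lambdaMax M * (y i)^2 :=
        Finset.sum_le_sum fun i _ => mul_le_mul_of_nonneg_right (hle i) (sq_nonneg _)
    _ = lambdaMax M * (y ⬝ᵥ y) := by
        rw [← Finset.mul_sum]; congr 1; simp [dotProduct, sq]

lemma lambdaMax_le [Nonempty n] {M : Matrix n n ℝ} (hM : M.IsHermitian) {c : ℝ}
    (h : ∀ x : n → ℝ, x ⬝ᵥ M *ᵥ x ≤ c * (x ⬝ᵥ x)) : lambdaMax M ≤ c := by
  refine csSup_le (eigSet_nonempty hM) ?_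
  rintro μ ⟨x, hx, hMx⟩
  have h1 : x ⬝ᵥ M *ᵥ x = μ * (x ⬝ᵥ x) := by
    rw [hMx]; simp [dotProduct_smul, smul_eq_mul]
  nlinarith [dot_self_pos hx, h x]

lemma exists_pos_eig [Nonempty n] {M : Matrix n n ℝ} (hM : M.IsHermitian)
    (h : 0 < lambdaMax M) :
    ∃ μ : ℝ, 0 < μ ∧ ∃ x : n → ℝ, x ≠ 0 ∧ M.mulVec x = μ • x := by
  obtain ⟨μ, hmem, hμ⟩ := exists_lt_of_lt_csSup (eigSet_nonempty hM) h
  exact ⟨μ, hμ, hmem⟩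

end Spectral

section QF
variable {V : Type*} [Fintype V] [DecidableEq V]
  (G : SimpleGraph V) [DecidableRel G.Adj]

/-- generalized weighted incidence quadratic-form matrix -/
noncomputable def qfMatrix (w : V → ℝ) : Matrix G.edgeSet G.edgeSet ℝ := fun e e' =>
  (if e = e' then (-1 : ℝ) else 1) *
    ∑ z : V, (if z ∈ (e : Sym2 V) ∧ z ∈ (e' : Sym2 V) then w z else 0)

lemma ricci_eq_qf : ricciMatrix G = qfMatrix G (fun z => ((G.degree z : ℝ))⁻¹) := rfl

lemma dirichlet_eq_qf (v : V) : dirichletMatrix G v =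
    qfMatrix G (fun z => if z = v then 0 else ((G.degree z : ℝ))⁻¹) := by
  funext e e'
  unfold dirichletMatrix qfMatrix
  congr 1
  refine Finset.sum_congr rfl fun z _ => ?_
  by_cases hz : z = v <;> by_cases h1 : z ∈ (e : Sym2 V) <;>
    by_cases h2 : z ∈ (e' : Sym2 V) <;> simp [hz, h1, h2]

lemma sum_comm3 {α β γ M : Type*} [Fintype α] [Fintype β] [Fintype γ] [AddCommMonoid M]
    (f : α → β → γ → M) :
    ∑ a : α, ∑ b : β, ∑ c : γ, f a b c = ∑ c : γ, ∑ a : α, ∑ b : β, f a b c := by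
  have h1 : ∀ a : α, (∑ b : β, ∑ c : γ, f a b c) = ∑ c : γ, ∑ b : β, f a b c :=
    fun a => Finset.sum_comm
  simp_rw [h1]
  exact Finset.sum_comm

lemma qfMatrix_isHermitian (w : V → ℝ) : (qfMatrix G w).IsHermitian := by
  ext e e'
  simp only [qfMatrix, Matrix.conjTranspose_apply, star_trivial]
  congr 1
  · simp [eq_comm]
  · exact Finset.sum_congr rfl fun z _ => if_congr and_comm rfl rfl

lemma qf_quadform (w : V → ℝ) (x : G.edgeSet → ℝ) :
    x ⬝ᵥ (qfMatrix G w) *ᵥ x =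
      ∑ z : V, w z *
        ((∑ e : G.edgeSet, if z ∈ (e : Sym2 V) then x e else 0) ^ 2
          - 2 * ∑ e : G.edgeSet, if z ∈ (e : Sym2 V) then (x e) ^ 2 else 0) := by
  have key : ∀ e e' : G.edgeSet, x e * (qfMatrix G w e e' * x e') =
      ∑ z : V, w z * ((if e = e' then (-1 : ℝ) else 1) *
        (if z ∈ (e : Sym2 V) ∧ z ∈ (e' : Sym2 V) then x e * x e' else 0)) := by
    intro e e'
    unfold qfMatrix
    rw [show x e * (((if e = e' then (-1:ℝ) else 1) *
        ∑ z : V, (if z ∈ (e : Sym2 V) ∧ z ∈ (e' : Sym2 V) then w z else 0)) * x e') =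
        ((if e = e' then (-1:ℝ) else 1) * (x e * x e')) *
        ∑ z : V, (if z ∈ (e : Sym2 V) ∧ z ∈ (e' : Sym2 V) then w z else 0) from by ring,
      Finset.mul_sum]
    refine Finset.sum_congr rfl fun z _ => ?_
    split_ifs <;> ring
  have h1 : x ⬝ᵥ (qfMatrix G w) *ᵥ x =
      ∑ e : G.edgeSet, ∑ e' : G.edgeSet, x e * (qfMatrix G w e e' * x e') := by
    simp [dotProduct, Matrix.mulVec, Finset.mul_sum]
  rw [h1]
  simp_rw [key]
  rw [sum_comm3]
  refine Finset.sum_congr rfl fun z _ => ?_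
  simp_rw [← Finset.mul_sum]
  congr 1
  have pointwise : ∀ e e' : G.edgeSet,
      (if e = e' then (-1:ℝ) else 1) *
        (if z ∈ (e : Sym2 V) ∧ z ∈ (e' : Sym2 V) then x e * x e' else 0)
      = (if z ∈ (e : Sym2 V) then x e else 0) * (if z ∈ (e' : Sym2 V) then x e' else 0)
          - 2 * (if e = e' then (if z ∈ (e : Sym2 V) then (x e)^2 else 0) else 0) := by
    intro e e'
    rcases eq_or_ne e e' with rfl | hne
    · by_cases hz : z ∈ (e : Sym2 V) <;> simp [hz] <;> ring
    · by_cases h1 : z ∈ (e : Sym2 V) <;> by_cases h2 : z ∈ (e' : Sym2 V) <;>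
        simp [hne, h1, h2]
  simp_rw [pointwise, Finset.sum_sub_distrib]
  congr 1
  · rw [← Finset.sum_mul_sum, sq]
  · rw [Finset.mul_sum]
    refine Finset.sum_congr rfl fun e _ => ?_
    rw [← Finset.mul_sum, Finset.sum_ite_eq]
    simp

end QF

section Comb
variable {V : Type*} [Fintype V] [DecidableEq V]
  (G : SimpleGraph V) [DecidableRel G.Adj] (v : V) (k : ℕ)

@[simp] lemma addLeaves_adj_inl_inl (x y : V) :
    (addLeaves G v k).Adj (Sum.inl x) (Sum.inl y) ↔ G.Adj x y := Iff.rfl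

@[simp] lemma addLeaves_adj_inl_inr (x : V) (i : Fin k) :
    (addLeaves G v k).Adj (Sum.inl x) (Sum.inr i) ↔ x = v := Iff.rfl

@[simp] lemma addLeaves_adj_inr_inl (i : Fin k) (y : V) :
    (addLeaves G v k).Adj (Sum.inr i) (Sum.inl y) ↔ y = v := Iff.rfl

@[simp] lemma addLeaves_adj_inr_inr (i j : Fin k) :
    ¬ (addLeaves G v k).Adj (Sum.inr i) (Sum.inr j) := fun h => h

/-- old edges, viewed in the extended graph -/
def oldEdge (e : G.edgeSet) : (addLeaves G v k).edgeSet :=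
  ⟨Sym2.map Sum.inl (e : Sym2 V), by
    obtain ⟨e, he⟩ := e
    induction e using Sym2.ind with
    | _ x y => simpa [SimpleGraph.mem_edgeSet] using he⟩

/-- new pendant edges -/
def newEdge (i : Fin k) : (addLeaves G v k).edgeSet :=
  ⟨s(Sum.inl v, Sum.inr i), by simp [SimpleGraph.mem_edgeSet]⟩

/-- the classification map for edges of the extended graph -/
def edgeMap : G.edgeSet ⊕ Fin k → (addLeaves G v k).edgeSet :=
  Sum.elim (oldEdge G v k) (newEdge G v k)

lemma edgeMap_bijective : Function.Bijective (edgeMap G v k) := by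
  constructor
  · rintro (e | i) (e' | j) h
    · simp only [edgeMap, Sum.elim_inl, oldEdge, Subtype.mk.injEq] at h
      have := Sym2.map.injective Sum.inl_injective h
      simp [Subtype.ext_iff, this]
    · exfalso
      simp only [edgeMap, Sum.elim_inl, Sum.elim_inr, oldEdge, newEdge,
        Subtype.mk.injEq] at h
      have : Sum.inr j ∈ Sym2.map (Sum.inl : V → V ⊕ Fin k) (e : Sym2 V) := by
        rw [h]; simp
      simp [Sym2.mem_map] at this
    · exfalso
      simp only [edgeMap, Sum.elim_inl, Sum.elim_inr, oldEdge, newEdge,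
        Subtype.mk.injEq] at h
      have : Sum.inr i ∈ Sym2.map (Sum.inl : V → V ⊕ Fin k) (e' : Sym2 V) := by
        rw [← h]; simp
      simp [Sym2.mem_map] at this
    · simp only [edgeMap, Sum.elim_inr, newEdge, Subtype.mk.injEq, Sym2.eq_iff] at h
      rcases h with ⟨-, h⟩ | ⟨h, -⟩ <;> simp_all
  · rintro ⟨e, he⟩
    induction e using Sym2.ind with
    | _ a b =>
      cases a with
      | inl x =>
        cases b with
        | inl y =>
          exact ⟨Sum.inl ⟨s(x, y), he⟩, by
            simp [edgeMap, oldEdge, Subtype.ext_iff]⟩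
        | inr i =>
          have hx : x = v := he
          subst hx
          exact ⟨Sum.inr i, by simp [edgeMap, newEdge, Subtype.ext_iff]⟩
      | inr i =>
        cases b with
        | inl y =>
          have hy : y = v := he
          subst hy
          exact ⟨Sum.inr i, by simp [edgeMap, newEdge, Subtype.ext_iff, Sym2.eq_swap]⟩
        | inr j => exact absurd he (addLeaves_adj_inr_inr G v k i j)

@[simp] lemma mem_oldEdge_inl (z : V) (e : G.edgeSet) :
    Sum.inl z ∈ ((oldEdge G v k e : (addLeaves G v k).edgeSet) : Sym2 (V ⊕ Fin k)) ↔
      z ∈ (e : Sym2 V) := by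
  simp [oldEdge, Sym2.mem_map]

@[simp] lemma mem_oldEdge_inr (i : Fin k) (e : G.edgeSet) :
    ¬ (Sum.inr i ∈ ((oldEdge G v k e : (addLeaves G v k).edgeSet) : Sym2 (V ⊕ Fin k))) := by
  simp [oldEdge, Sym2.mem_map]

@[simp] lemma mem_newEdge_inl (z : V) (i : Fin k) :
    Sum.inl z ∈ ((newEdge G v k i : (addLeaves G v k).edgeSet) : Sym2 (V ⊕ Fin k)) ↔
      z = v := by
  simp [newEdge]

@[simp] lemma mem_newEdge_inr (i j : Fin k) :
    Sum.inr i ∈ ((newEdge G v k j : (addLeaves G v k).edgeSet) : Sym2 (V ⊕ Fin k)) ↔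
      i = j := by
  simp [newEdge]

lemma sum_edges_s11 (F : (addLeaves G v k).edgeSet → ℝ) :
    ∑ ε : (addLeaves G v k).edgeSet, F ε =
      (∑ e : G.edgeSet, F (oldEdge G v k e)) + ∑ i : Fin k, F (newEdge G v k i) := by
  rw [← Fintype.sum_bijective (edgeMap G v k) (edgeMap_bijective G v k) _ F (fun _ => rfl)]
  rw [Fintype.sum_sum_type]
  rfl

lemma degree_eq_sum (z : V) :
    G.degree z = ∑ y : V, if G.Adj z y then 1 else 0 := by
  have h : G.neighborFinset z = Finset.univ.filter (fun y => G.Adj z y) := by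
    ext y; simp
  rw [← SimpleGraph.card_neighborFinset_eq_degree, h, Finset.card_filter]

lemma addLeaves_degree_inl (z : V) :
    ((addLeaves G v k).degree (Sum.inl z) : ℝ) =
      (G.degree z : ℝ) + if z = v then (k : ℝ) else 0 := by
  have h1 := degree_eq_sum (addLeaves G v k) (Sum.inl z)
  rw [Fintype.sum_sum_type] at h1
  have h2 : (∑ i : Fin k, if (addLeaves G v k).Adj (Sum.inl z) (Sum.inr i) then 1 else 0)
      = if z = v then k else 0 := by
    by_cases hz : z = v <;> simp [hz]
  rw [h1, h2, degree_eq_sum G z]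
  push_cast
  simp

lemma addLeaves_degree_inr (i : Fin k) :
    (addLeaves G v k).degree (Sum.inr i) = 1 := by
  rw [degree_eq_sum, Fintype.sum_sum_type]
  simp

end Comb

section Main
variable {V : Type*} [Fintype V] [DecidableEq V]
  (G : SimpleGraph V) [DecidableRel G.Adj] (v : V) (k : ℕ)

lemma sum_inl_mem (h : (addLeaves G v k).edgeSet → ℝ) (z : V) :
    (∑ ε : (addLeaves G v k).edgeSet,
        if Sum.inl z ∈ (ε : Sym2 (V ⊕ Fin k)) then h ε else 0) =
      (∑ e : G.edgeSet, if z ∈ (e : Sym2 V) then h (oldEdge G v k e) else 0) +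
      (if z = v then ∑ i : Fin k, h (newEdge G v k i) else 0) := by
  rw [sum_edges_s11 G v k (fun ε => if Sum.inl z ∈ (ε : Sym2 (V ⊕ Fin k)) then h ε else 0)]
  congr 1
  · exact Finset.sum_congr rfl fun e _ => if_congr (mem_oldEdge_inl G v k z e) rfl rfl
  · by_cases hz : z = v
    · simp [hz]
    · simp [hz]

lemma sum_inr_mem (h : (addLeaves G v k).edgeSet → ℝ) (i : Fin k) :
    (∑ ε : (addLeaves G v k).edgeSet,
        if Sum.inr i ∈ (ε : Sym2 (V ⊕ Fin k)) then h ε else 0) =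
      h (newEdge G v k i) := by
  rw [sum_edges_s11 G v k (fun ε => if Sum.inr i ∈ (ε : Sym2 (V ⊕ Fin k)) then h ε else 0)]
  simp

lemma addLeaves_quadform (g : (addLeaves G v k).edgeSet → ℝ) :
    g ⬝ᵥ ricciMatrix (addLeaves G v k) *ᵥ g =
      (fun e => g (oldEdge G v k e)) ⬝ᵥ
          dirichletMatrix G v *ᵥ (fun e => g (oldEdge G v k e)) +
      ((G.degree v : ℝ) + (k : ℝ))⁻¹ *
        (((∑ e : G.edgeSet, if v ∈ (e : Sym2 V) then g (oldEdge G v k e) else 0) +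
            ∑ i : Fin k, g (newEdge G v k i)) ^ 2 -
          2 * ((∑ e : G.edgeSet, if v ∈ (e : Sym2 V) then (g (oldEdge G v k e)) ^ 2 else 0) +
            ∑ i : Fin k, (g (newEdge G v k i)) ^ 2)) -
      ∑ i : Fin k, (g (newEdge G v k i)) ^ 2 := by
  have hqf := qf_quadform (addLeaves G v k)
      (fun w => (((addLeaves G v k).degree w : ℝ))⁻¹) g
  rw [ricci_eq_qf, hqf, Fintype.sum_sum_type]
  have hinr : (∑ i : Fin k,
      (((addLeaves G v k).degree (Sum.inr i) : ℝ))⁻¹ *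
        ((∑ ε : (addLeaves G v k).edgeSet,
            if Sum.inr i ∈ (ε : Sym2 (V ⊕ Fin k)) then g ε else 0) ^ 2 -
          2 * ∑ ε : (addLeaves G v k).edgeSet,
            if Sum.inr i ∈ (ε : Sym2 (V ⊕ Fin k)) then (g ε) ^ 2 else 0)) =
      - ∑ i : Fin k, (g (newEdge G v k i)) ^ 2 := by
    rw [← Finset.sum_neg_distrib]
    refine Finset.sum_congr rfl fun i _ => ?_
    rw [sum_inr_mem G v k g i, sum_inr_mem G v k (fun ε => (g ε)^2) i,
      addLeaves_degree_inr]
    push_cast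
    ring
  have hD : (fun e => g (oldEdge G v k e)) ⬝ᵥ
      dirichletMatrix G v *ᵥ (fun e => g (oldEdge G v k e)) =
      ∑ z : V, (if z = v then 0 else
        ((G.degree z : ℝ))⁻¹ *
          ((∑ e : G.edgeSet, if z ∈ (e : Sym2 V) then g (oldEdge G v k e) else 0) ^ 2 -
            2 * ∑ e : G.edgeSet, if z ∈ (e : Sym2 V) then (g (oldEdge G v k e)) ^ 2 else 0)) := by
    rw [dirichlet_eq_qf, qf_quadform]
    exact Finset.sum_congr rfl fun z _ => by rw [ite_mul, zero_mul]
  have hinl : (∑ z : V,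
      (((addLeaves G v k).degree (Sum.inl z) : ℝ))⁻¹ *
        ((∑ ε : (addLeaves G v k).edgeSet,
            if Sum.inl z ∈ (ε : Sym2 (V ⊕ Fin k)) then g ε else 0) ^ 2 -
          2 * ∑ ε : (addLeaves G v k).edgeSet,
            if Sum.inl z ∈ (ε : Sym2 (V ⊕ Fin k)) then (g ε) ^ 2 else 0)) =
      (fun e => g (oldEdge G v k e)) ⬝ᵥ
          dirichletMatrix G v *ᵥ (fun e => g (oldEdge G v k e)) +
      ((G.degree v : ℝ) + (k : ℝ))⁻¹ *
        (((∑ e : G.edgeSet, if v ∈ (e : Sym2 V) then g (oldEdge G v k e) else 0) +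
            ∑ i : Fin k, g (newEdge G v k i)) ^ 2 -
          2 * ((∑ e : G.edgeSet, if v ∈ (e : Sym2 V) then (g (oldEdge G v k e)) ^ 2 else 0) +
            ∑ i : Fin k, (g (newEdge G v k i)) ^ 2)) := by
    rw [hD]
    rw [show ((G.degree v : ℝ) + (k : ℝ))⁻¹ *
        (((∑ e : G.edgeSet, if v ∈ (e : Sym2 V) then g (oldEdge G v k e) else 0) +
            ∑ i : Fin k, g (newEdge G v k i)) ^ 2 -
          2 * ((∑ e : G.edgeSet, if v ∈ (e : Sym2 V) then (g (oldEdge G v k e)) ^ 2 else 0) +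
            ∑ i : Fin k, (g (newEdge G v k i)) ^ 2)) =
        ∑ z : V, (if z = v then ((G.degree v : ℝ) + (k : ℝ))⁻¹ *
        (((∑ e : G.edgeSet, if v ∈ (e : Sym2 V) then g (oldEdge G v k e) else 0) +
            ∑ i : Fin k, g (newEdge G v k i)) ^ 2 -
          2 * ((∑ e : G.edgeSet, if v ∈ (e : Sym2 V) then (g (oldEdge G v k e)) ^ 2 else 0) +
            ∑ i : Fin k, (g (newEdge G v k i)) ^ 2)) else 0) from by
      rw [Finset.sum_ite_eq']; simp]
    rw [← Finset.sum_add_distrib]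
    refine Finset.sum_congr rfl fun z _ => ?_
    rw [sum_inl_mem G v k g z, sum_inl_mem G v k (fun ε => (g ε)^2) z,
      addLeaves_degree_inl G v k z]
    by_cases hz : z = v
    · subst hz
      simp only [if_pos trivial, eq_self_iff_true, if_true]
      ring
    · simp only [if_neg hz]
      ring
  rw [hinr, hinl]
  ring

end Main

section MoreComb
variable {V : Type*} [Fintype V] [DecidableEq V]
  (G : SimpleGraph V) [DecidableRel G.Adj] (v : V) (k : ℕ)

lemma oldEdge_ne_newEdge (e : G.edgeSet) (i : Fin k) :
    oldEdge G v k e ≠ newEdge G v k i := by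
  intro h
  have hmem : Sum.inr i ∈ ((oldEdge G v k e : (addLeaves G v k).edgeSet) :
      Sym2 (V ⊕ Fin k)) := by rw [h]; simp
  exact mem_oldEdge_inr G v k i e hmem

lemma oldEdge_injective : Function.Injective (oldEdge G v k) := by
  intro e e' h
  exact Subtype.ext (Sym2.map.injective Sum.inl_injective (Subtype.ext_iff.mp h))

lemma ricci_isHermitian_s11 {W : Type*} [Fintype W] [DecidableEq W]
    (H : SimpleGraph W) [DecidableRel H.Adj] : (ricciMatrix H).IsHermitian := by
  rw [ricci_eq_qf]; exact qfMatrix_isHermitian H _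

lemma dirichlet_isHermitian : (dirichletMatrix G v).IsHermitian := by
  rw [dirichlet_eq_qf]; exact qfMatrix_isHermitian G _

lemma sum_sq_edges (g : (addLeaves G v k).edgeSet → ℝ) :
    g ⬝ᵥ g = (∑ e : G.edgeSet, (g (oldEdge G v k e)) ^ 2) +
      ∑ i : Fin k, (g (newEdge G v k i)) ^ 2 := by
  have h : g ⬝ᵥ g = ∑ ε : (addLeaves G v k).edgeSet, (g ε)^2 := by
    simp [dotProduct, sq]
  rw [h, sum_edges_s11 G v k (fun ε => (g ε)^2)]

end MoreComb

section Arith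

lemma arith_upper {kr m n ε F a s Qv q PF : ℝ} (hε : 0 < ε) (hn : 0 < n) (hkn : kr ≤ n)
    (hF : F ≤ 0) (hs : s ^ 2 ≤ kr * q) (ha : a ^ 2 ≤ m * Qv) (hQP : Qv ≤ PF)
    (hq : 0 ≤ q) (hQ : 0 ≤ Qv) (hP : 0 ≤ PF) (hm : 0 ≤ m) :
    F + n⁻¹ * ((a + s) ^ 2 - 2 * (Qv + q)) - q ≤
      (ε + (1 + ε⁻¹) * m / n) * (PF + q) := by
  have hεi : 0 < ε⁻¹ := inv_pos.mpr hε
  have hni : 0 ≤ n⁻¹ := (inv_pos.mpr hn).le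
  have hyoung : (a + s) ^ 2 ≤ (1 + ε) * s ^ 2 + (1 + ε⁻¹) * a ^ 2 := by
    have hkey : ε⁻¹ * (ε * s - a) ^ 2 = ε * s ^ 2 + ε⁻¹ * a ^ 2 - 2 * a * s := by
      field_simp; ring
    nlinarith [mul_nonneg hεi.le (sq_nonneg (ε * s - a))]
  have h1 : (a + s) ^ 2 ≤ (1 + ε) * (kr * q) + (1 + ε⁻¹) * (m * Qv) := by
    have h1a : (1 + ε) * s ^ 2 ≤ (1 + ε) * (kr * q) :=
      mul_le_mul_of_nonneg_left hs (by linarith)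
    have h1b : (1 + ε⁻¹) * a ^ 2 ≤ (1 + ε⁻¹) * (m * Qv) :=
      mul_le_mul_of_nonneg_left ha (by linarith)
    linarith
  have h2 : n⁻¹ * ((a + s) ^ 2) ≤ n⁻¹ * ((1 + ε) * (kr * q)) +
      n⁻¹ * ((1 + ε⁻¹) * (m * Qv)) := by
    have h := mul_le_mul_of_nonneg_left h1 hni
    linarith [h]
  have hkr1 : n⁻¹ * kr ≤ 1 := by
    rw [inv_mul_le_iff₀ hn]; linarith
  have h3 : n⁻¹ * ((1 + ε) * (kr * q)) ≤ (1 + ε) * q := by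
    have hc : 0 ≤ (1 + ε) * q := by positivity
    calc n⁻¹ * ((1 + ε) * (kr * q)) = (1 + ε) * q * (n⁻¹ * kr) := by ring
      _ ≤ (1 + ε) * q * 1 := mul_le_mul_of_nonneg_left hkr1 hc
      _ = (1 + ε) * q := by ring
  have h4 : n⁻¹ * ((1 + ε⁻¹) * (m * Qv)) ≤ ((1 + ε⁻¹) * m / n) * PF := by
    rw [div_eq_mul_inv]
    have hc : 0 ≤ (1 + ε⁻¹) * m * n⁻¹ := by positivity
    calc n⁻¹ * ((1 + ε⁻¹) * (m * Qv)) = ((1 + ε⁻¹) * m * n⁻¹) * Qv := by ring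
      _ ≤ ((1 + ε⁻¹) * m * n⁻¹) * PF := mul_le_mul_of_nonneg_left hQP hc
  have h5 : 0 ≤ n⁻¹ * (Qv + q) := by positivity
  have h6 : 0 ≤ ε * PF := by positivity
  have h7 : 0 ≤ ((1 + ε⁻¹) * m / n) * q := by
    have : 0 ≤ (1 + ε⁻¹) * m / n := by positivity
    exact mul_nonneg this hq
  have hexp : F + n⁻¹ * ((a + s) ^ 2 - 2 * (Qv + q)) - q =
      F + n⁻¹ * ((a + s) ^ 2) - 2 * (n⁻¹ * (Qv + q)) - q := by ring
  have hrhs : (ε + (1 + ε⁻¹) * m / n) * (PF + q) =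
      ε * PF + ε * q + ((1 + ε⁻¹) * m / n) * PF + ((1 + ε⁻¹) * m / n) * q := by ring
  have hq' : (1 + ε) * q = q + ε * q := by ring
  rw [hexp, hrhs]
  linarith

end Arith

section MainLemmas
variable {V : Type*} [Fintype V] [DecidableEq V]
  (G : SimpleGraph V) [DecidableRel G.Adj] (v : V)

lemma lambda_upper (e0 : G.edgeSet)
    (hlam : lambdaMax (dirichletMatrix G v) ≤ 0)
    {k : ℕ} (hk : 1 ≤ k) {ε : ℝ} (hε : 0 < ε) :
    lambdaMax (ricciMatrix (addLeaves G v k)) ≤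
      ε + (1 + ε⁻¹) * (Fintype.card G.edgeSet : ℝ) / ((G.degree v : ℝ) + k) := by
  classical
  haveI hne : Nonempty G.edgeSet := ⟨e0⟩
  haveI : Nonempty (addLeaves G v k).edgeSet := ⟨oldEdge G v k e0⟩
  have hk1 : (1 : ℝ) ≤ (k : ℝ) := by exact_mod_cast hk
  have hd0 : (0 : ℝ) ≤ (G.degree v : ℝ) := Nat.cast_nonneg _
  have hn : (0 : ℝ) < (G.degree v : ℝ) + k := by linarith
  refine lambdaMax_le (ricci_isHermitian_s11 (addLeaves G v k)) fun g => ?_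
  rw [addLeaves_quadform G v k g, sum_sq_edges G v k g]
  have hq : (0:ℝ) ≤ ∑ i : Fin k, (g (newEdge G v k i)) ^ 2 :=
    Finset.sum_nonneg fun i _ => sq_nonneg _
  have hQ : (0:ℝ) ≤ ∑ e : G.edgeSet, (if v ∈ (e : Sym2 V) then (g (oldEdge G v k e)) ^ 2 else 0) :=
    Finset.sum_nonneg fun e _ => by split_ifs <;> positivity
  have hP : (0:ℝ) ≤ ∑ e : G.edgeSet, (g (oldEdge G v k e)) ^ 2 :=
    Finset.sum_nonneg fun e _ => sq_nonneg _
  have hQP : (∑ e : G.edgeSet, if v ∈ (e : Sym2 V) then (g (oldEdge G v k e)) ^ 2 else 0) ≤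
      ∑ e : G.edgeSet, (g (oldEdge G v k e)) ^ 2 := by
    refine Finset.sum_le_sum fun e _ => ?_
    split_ifs
    · exact le_rfl
    · positivity
  have hs : (∑ i : Fin k, g (newEdge G v k i)) ^ 2 ≤
      (k : ℝ) * ∑ i : Fin k, (g (newEdge G v k i)) ^ 2 := by
    have h := sq_sum_le_card_mul_sum_sq (s := (Finset.univ : Finset (Fin k)))
      (f := fun i => g (newEdge G v k i))
    simpa using h
  have ha : (∑ e : G.edgeSet, if v ∈ (e : Sym2 V) then g (oldEdge G v k e) else 0) ^ 2 ≤
      (Fintype.card G.edgeSet : ℝ) *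
        ∑ e : G.edgeSet, (if v ∈ (e : Sym2 V) then (g (oldEdge G v k e)) ^ 2 else 0) := by
    have h1 := sq_sum_le_card_mul_sum_sq (s := (Finset.univ : Finset G.edgeSet))
      (f := fun e => if v ∈ (e : Sym2 V) then g (oldEdge G v k e) else 0)
    have h2 : (∑ e : G.edgeSet, (if v ∈ (e : Sym2 V) then g (oldEdge G v k e) else 0) ^ 2) =
        ∑ e : G.edgeSet, (if v ∈ (e : Sym2 V) then (g (oldEdge G v k e)) ^ 2 else 0) :=
      Finset.sum_congr rfl fun e _ => by split_ifs <;> simp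
    calc (∑ e : G.edgeSet, if v ∈ (e : Sym2 V) then g (oldEdge G v k e) else 0) ^ 2
        ≤ ((Finset.univ : Finset G.edgeSet).card : ℝ) *
            ∑ e : G.edgeSet, (if v ∈ (e : Sym2 V) then g (oldEdge G v k e) else 0) ^ 2 := by
          exact_mod_cast h1
      _ = (Fintype.card G.edgeSet : ℝ) *
            ∑ e : G.edgeSet, (if v ∈ (e : Sym2 V) then (g (oldEdge G v k e)) ^ 2 else 0) := by
          rw [Finset.card_univ, h2]
  have hFf : (fun e => g (oldEdge G v k e)) ⬝ᵥ
      dirichletMatrix G v *ᵥ (fun e => g (oldEdge G v k e)) ≤ 0 := by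
    have h1 := dot_mulVec_le (dirichlet_isHermitian G v) (fun e => g (oldEdge G v k e))
    have h2 : (fun e => g (oldEdge G v k e)) ⬝ᵥ (fun e => g (oldEdge G v k e)) =
        ∑ e : G.edgeSet, (g (oldEdge G v k e)) ^ 2 := by
      simp [dotProduct, sq]
    have h3 : lambdaMax (dirichletMatrix G v) *
        ((fun e => g (oldEdge G v k e)) ⬝ᵥ (fun e => g (oldEdge G v k e))) ≤ 0 := by
      rw [h2]; exact mul_nonpos_of_nonpos_of_nonneg hlam hP
    linarith
  have hkn : (k : ℝ) ≤ (G.degree v : ℝ) + k := by linarith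
  exact arith_upper hε hn hkn hFf hs ha hQP hq hQ hP (Nat.cast_nonneg _)

lemma lambda_lower (e0 : G.edgeSet) {k : ℕ} (hk : 1 ≤ k) :
    -(((G.degree v : ℝ) + 2) / ((G.degree v : ℝ) + k)) ≤
      lambdaMax (ricciMatrix (addLeaves G v k)) := by
  classical
  haveI : Nonempty (addLeaves G v k).edgeSet := ⟨oldEdge G v k e0⟩
  have hkR : (1 : ℝ) ≤ (k : ℝ) := by exact_mod_cast hk
  have hdR : (0 : ℝ) ≤ (G.degree v : ℝ) := Nat.cast_nonneg _
  have hn : (0 : ℝ) < (G.degree v : ℝ) + k := by linarith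
  set g : (addLeaves G v k).edgeSet → ℝ :=
    fun ε => if ∃ i : Fin k, ε = newEdge G v k i then 1 else 0 with hg
  have hgold : ∀ e, g (oldEdge G v k e) = 0 := by
    intro e
    rw [hg]
    simp only
    rw [if_neg]
    rintro ⟨i, hi⟩
    exact oldEdge_ne_newEdge G v k e i hi
  have hgnew : ∀ i, g (newEdge G v k i) = 1 := by
    intro i
    rw [hg]
    simp only
    rw [if_pos ⟨i, rfl⟩]
  have hΦ := addLeaves_quadform G v k g
  have hs1 : (∑ i : Fin k, g (newEdge G v k i)) = (k : ℝ) := by simp [hgnew]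
  have hs2 : (∑ i : Fin k, (g (newEdge G v k i)) ^ 2) = (k : ℝ) := by simp [hgnew]
  have ha0 : (∑ e : G.edgeSet, if v ∈ (e : Sym2 V) then g (oldEdge G v k e) else 0) = 0 := by
    simp [hgold]
  have hQ0 : (∑ e : G.edgeSet, if v ∈ (e : Sym2 V) then (g (oldEdge G v k e)) ^ 2 else 0) = 0 := by
    simp [hgold]
  have hf0 : (fun e => g (oldEdge G v k e)) = (0 : G.edgeSet → ℝ) :=
    funext fun e => hgold e
  rw [hs1, hs2, ha0, hQ0, hf0, zero_dotProduct] at hΦ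
  have hgg : g ⬝ᵥ g = (k : ℝ) := by
    rw [sum_sq_edges G v k g, hs2]
    have : (∑ e : G.edgeSet, (g (oldEdge G v k e)) ^ 2) = 0 := by simp [hgold]
    rw [this, zero_add]
  have hray := dot_mulVec_le (ricci_isHermitian_s11 (addLeaves G v k)) g
  rw [hΦ, hgg] at hray
  have hΦval : (0:ℝ) + ((G.degree v : ℝ) + (k:ℝ))⁻¹ * ((0 + (k:ℝ)) ^ 2 - 2 * (0 + (k:ℝ)))
      - (k:ℝ) = (-(((G.degree v : ℝ) + 2) / ((G.degree v : ℝ) + k))) * k := by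
    field_simp
    ring
  rw [hΦval] at hray
  have hkpos : (0 : ℝ) < (k : ℝ) := by linarith
  exact le_of_mul_le_mul_right hray hkpos

lemma lambda_lower_eig {k : ℕ} {μ : ℝ} {x : G.edgeSet → ℝ} (hx : x ≠ 0)
    (heig : (dirichletMatrix G v).mulVec x = μ • x) :
    μ - 2 * ((G.degree v : ℝ) + k)⁻¹ ≤ lambdaMax (ricciMatrix (addLeaves G v k)) := by
  classical
  obtain ⟨e1, he1⟩ := Function.ne_iff.mp hx
  haveI : Nonempty (addLeaves G v k).edgeSet := ⟨oldEdge G v k e1⟩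
  have hni : (0:ℝ) ≤ ((G.degree v : ℝ) + k)⁻¹ := by positivity
  set g : (addLeaves G v k).edgeSet → ℝ :=
    fun ε => if h : ∃ e : G.edgeSet, oldEdge G v k e = ε then x h.choose else 0 with hg
  have hgold : ∀ e, g (oldEdge G v k e) = x e := by
    intro e
    have hex : ∃ e' : G.edgeSet, oldEdge G v k e' = oldEdge G v k e := ⟨e, rfl⟩
    rw [hg]
    simp only
    rw [dif_pos hex]
    exact congrArg x (oldEdge_injective G v k hex.choose_spec)
  have hgnew : ∀ i, g (newEdge G v k i) = 0 := by
    intro i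
    rw [hg]
    simp only
    rw [dif_neg]
    rintro ⟨e, he⟩
    exact oldEdge_ne_newEdge G v k e i he
  have hΦ := addLeaves_quadform G v k g
  have hfx : (fun e => g (oldEdge G v k e)) = x := funext fun e => hgold e
  have hs0 : (∑ i : Fin k, g (newEdge G v k i)) = 0 := by simp [hgnew]
  have hq0 : (∑ i : Fin k, (g (newEdge G v k i)) ^ 2) = 0 := by simp [hgnew]
  rw [hfx] at hΦ
  simp only [hgold] at hΦ
  rw [hs0, hq0] at hΦ
  rw [add_zero, add_zero, sub_zero] at hΦ
  have hxx : (0:ℝ) < x ⬝ᵥ x := dot_self_pos hx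
  have hDx : x ⬝ᵥ dirichletMatrix G v *ᵥ x = μ * (x ⬝ᵥ x) := by
    rw [heig]
    simp [dotProduct_smul, smul_eq_mul]
  rw [hDx] at hΦ
  have hQP : (∑ e : G.edgeSet, if v ∈ (e : Sym2 V) then (x e) ^ 2 else 0) ≤ x ⬝ᵥ x := by
    have hxP : x ⬝ᵥ x = ∑ e : G.edgeSet, (x e) ^ 2 := by simp [dotProduct, sq]
    rw [hxP]
    refine Finset.sum_le_sum fun e _ => ?_
    split_ifs
    · exact le_rfl
    · positivity
  have hgg : g ⬝ᵥ g = x ⬝ᵥ x := by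
    rw [sum_sq_edges G v k g, hq0, add_zero]
    simp only [hgold]
    simp [dotProduct, sq]
  have hray := dot_mulVec_le (ricci_isHermitian_s11 (addLeaves G v k)) g
  rw [hΦ, hgg] at hray
  have hstep : (μ - 2 * ((G.degree v : ℝ) + k)⁻¹) * (x ⬝ᵥ x) ≤
      μ * (x ⬝ᵥ x) + ((G.degree v : ℝ) + (k:ℝ))⁻¹ *
        ((∑ e : G.edgeSet, if v ∈ (e : Sym2 V) then x e else 0) ^ 2 -
          2 * (∑ e : G.edgeSet, if v ∈ (e : Sym2 V) then (x e) ^ 2 else 0)) := by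
    have h1 : 0 ≤ ((G.degree v : ℝ) + (k:ℝ))⁻¹ *
        (∑ e : G.edgeSet, if v ∈ (e : Sym2 V) then x e else 0) ^ 2 := by positivity
    have h2 : ((G.degree v : ℝ) + (k:ℝ))⁻¹ *
        (∑ e : G.edgeSet, if v ∈ (e : Sym2 V) then (x e) ^ 2 else 0) ≤
        ((G.degree v : ℝ) + (k:ℝ))⁻¹ * (x ⬝ᵥ x) :=
      mul_le_mul_of_nonneg_left hQP hni
    nlinarith
  have hfin := hstep.trans hray
  exact le_of_mul_le_mul_right hfin hxx

end MainLemmas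

/-- With `λ_k = λ_max(R_{T_k})`, we have `lim_{k→∞} λ_k = 0` if and only if
`λ_max(M^v) ≤ 0`, where `M^v` is the Dirichlet matrix of `T` at `v`. -/
theorem lambdaMax_tendsto_zero_iff {V : Type*} [Fintype V] [DecidableEq V]
    (G : SimpleGraph V) [DecidableRel G.Adj]
    (hT : G.IsTree) (h1 : 1 ≤ G.edgeFinset.card) (v : V) :
    Filter.Tendsto (fun k : ℕ => lambdaMax (ricciMatrix (addLeaves G v k)))
        Filter.atTop (nhds 0) ↔
      lambdaMax (dirichletMatrix G v) ≤ 0 := by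
  classical
  obtain ⟨E0, hE0⟩ := Finset.card_pos.mp h1
  have e0 : G.edgeSet := ⟨E0, SimpleGraph.mem_edgeFinset.mp hE0⟩
  haveI : Nonempty G.edgeSet := ⟨e0⟩
  constructor
  · intro hten
    by_contra hpos
    push_neg at hpos
    obtain ⟨μ, hμ, x, hx, heig⟩ := exists_pos_eig (dirichlet_isHermitian G v) hpos
    obtain ⟨N, hN⟩ := Metric.tendsto_atTop.mp hten (μ / 2) (by positivity)
    obtain ⟨K, hK⟩ := exists_nat_gt (4 / μ)
    set k := max N K with hkdef
    have habs : |lambdaMax (ricciMatrix (addLeaves G v k))| < μ / 2 := by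
      have h := hN k (le_max_left N K)
      rwa [Real.dist_eq, sub_zero] at h
    have hup := (abs_lt.mp habs).2
    have hlow := lambda_lower_eig G v (k := k) hx heig
    have hkK : (4 / μ : ℝ) < (k : ℝ) := lt_of_lt_of_le hK (by exact_mod_cast le_max_right N K)
    have hkpos : (0:ℝ) < (k:ℝ) := lt_of_le_of_lt (by positivity) hkK
    have hd0 : (0:ℝ) ≤ (G.degree v : ℝ) := Nat.cast_nonneg _
    have hinv1 : ((G.degree v : ℝ) + k)⁻¹ ≤ (k:ℝ)⁻¹ := by
      apply inv_anti₀ hkpos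
      linarith
    have hinv2 : (k:ℝ)⁻¹ < μ / 4 := by
      have h4 : (0:ℝ) < 4 / μ := by positivity
      have h := inv_strictAnti₀ h4 hkK
      rwa [inv_div] at h
    linarith
  · intro hlam
    rw [Metric.tendsto_atTop]
    intro ε hε
    have hε4 : (0:ℝ) < ε/4 := by positivity
    obtain ⟨N₁, hN₁⟩ :=
      exists_nat_gt ((1 + (ε/4)⁻¹) * (Fintype.card G.edgeSet : ℝ) / (ε/2))
    obtain ⟨N₂, hN₂⟩ := exists_nat_gt (((G.degree v : ℝ) + 2) / ε)
    refine ⟨max (max N₁ N₂) 1, fun k hk => ?_⟩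
    have hk1 : 1 ≤ k := le_trans (le_max_right _ 1) hk
    have hkN₁ : (N₁:ℝ) ≤ (k:ℝ) := by
      exact_mod_cast le_trans (le_trans (le_max_left N₁ N₂) (le_max_left _ 1)) hk
    have hkN₂ : (N₂:ℝ) ≤ (k:ℝ) := by
      exact_mod_cast le_trans (le_trans (le_max_right N₁ N₂) (le_max_left _ 1)) hk
    have hk1R : (1:ℝ) ≤ (k:ℝ) := by exact_mod_cast hk1
    have hd0 : (0:ℝ) ≤ (G.degree v : ℝ) := Nat.cast_nonneg _
    have hm0 : (0:ℝ) ≤ (Fintype.card G.edgeSet : ℝ) := Nat.cast_nonneg _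
    have hnpos : (0:ℝ) < (G.degree v : ℝ) + k := by linarith
    rw [Real.dist_eq, sub_zero, abs_lt]
    constructor
    · have hlow := lambda_lower G v e0 (k := k) hk1
      have h2 : (G.degree v : ℝ) + 2 < (k:ℝ) * ε :=
        (div_lt_iff₀ hε).mp (lt_of_lt_of_le hN₂ hkN₂)
      have hfrac : ((G.degree v : ℝ) + 2) / ((G.degree v : ℝ) + k) < ε := by
        rw [div_lt_iff₀ hnpos]
        nlinarith [mul_nonneg hε.le hd0]
      linarith
    · have hup := lambda_upper G v e0 hlam (k := k) hk1 hε4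
      have h2 : (1 + (ε/4)⁻¹) * (Fintype.card G.edgeSet : ℝ) < (k:ℝ) * (ε/2) :=
        (div_lt_iff₀ (by positivity)).mp (lt_of_lt_of_le hN₁ hkN₁)
      have hfrac : (1 + (ε/4)⁻¹) * (Fintype.card G.edgeSet : ℝ) /
          ((G.degree v : ℝ) + k) < ε/2 := by
        rw [div_lt_iff₀ hnpos]
        nlinarith [mul_nonneg (by positivity : (0:ℝ) ≤ ε/2) hd0]
      linarith
end
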